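/- arXiv:2508.04688 — 2 statements merged into one kernel-verified Lean document; each statement's English description precedes it below -/
import Mathlib

section
/- Let 1 < r < 2 and let m, M > 0. Suppose G : ℝ² → ℝ² is continuous, strictly monotone, satisfies G(λξ) = |λ|^{r-2}λ G(ξ) for all λ ∈ ℝ, ξ ∈ ℝ², and m|ξ|^{r-1} ≤ |G(ξ)| ≤ M|ξ|^{r-1}. Then G is surjective onto ℝ², hence bijective, and its inverse G⁻¹ satisfies the homogeneity G⁻¹(λη) = |λ|^{r'-2}λ G⁻¹(η) for all λ ∈ ℝ, η ∈ ℝ², where r' = r/(r-1). -/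
open Real RealInnerProductSpace

/-- A continuous, strictly monotone map `G : ℝ² → ℝ²`, homogeneous of degree `r−1`
and with two-sided coercivity bounds `m|ξ|^{r-1} ≤ |G(ξ)| ≤ M|ξ|^{r-1}`, is
bijective, and its inverse satisfies the homogeneity
`G⁻¹(λη) = |λ|^{r'-2}λ G⁻¹(η)` with `r' = r/(r-1)`. -/
theorem drag_bijective_inverse_homogeneous (r r' m M : ℝ)
    (hr1 : 1 < r) (hr2 : r < 2) (hr' : r' = r / (r - 1))
    (hm : 0 < m) (hM : 0 < M)
    (G : EuclideanSpace ℝ (Fin 2) → EuclideanSpace ℝ (Fin 2))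
    (hcont : Continuous G)
    (hmono : ∀ ξ τ : EuclideanSpace ℝ (Fin 2), ξ ≠ τ → 0 < ⟪G ξ - G τ, ξ - τ⟫)
    (hhom : ∀ (l : ℝ) (ξ : EuclideanSpace ℝ (Fin 2)),
      G (l • ξ) = (|l| ^ (r - 2) * l) • G ξ)
    (hlow : ∀ ξ : EuclideanSpace ℝ (Fin 2), m * ‖ξ‖ ^ (r - 1) ≤ ‖G ξ‖)
    (hup : ∀ ξ : EuclideanSpace ℝ (Fin 2), ‖G ξ‖ ≤ M * ‖ξ‖ ^ (r - 1)) :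
    Function.Surjective G ∧ Function.Bijective G ∧
    ∀ (l : ℝ) (η : EuclideanSpace ℝ (Fin 2)),
      Function.invFun G (l • η) = (|l| ^ (r' - 2) * l) • Function.invFun G η := by
  have hrne : r - 1 ≠ 0 := by intro h; linarith [hr1]
  -- injectivity
  have hinj : Function.Injective G := by
    intro ξ τ h
    by_contra hne
    have := hmono ξ τ hne
    rw [h, sub_self] at this
    simp at this
  -- G 0 = 0
  have hG0 : G 0 = 0 := by
    have := hhom 0 0
    simpa using this
  -- oddness
  have hodd : ∀ ξ, G (-ξ) = -G ξ := by
    intro ξ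
    have := hhom (-1) ξ
    simpa [Real.one_rpow] using this
  -- positive scaling
  have hscale : ∀ (t : ℝ), 0 < t → ∀ ξ, G (t • ξ) = (t ^ (r - 1)) • G ξ := by
    intro t ht ξ
    rw [hhom]
    congr 1
    rw [abs_of_pos ht, ← Real.rpow_add_one ht.ne']
    ring_nf
  -- surjectivity
  have hsurj : Function.Surjective G := by
    intro η
    rcases eq_or_ne η 0 with rfl | hη
    · exact ⟨0, hG0⟩
    · -- circle parametrization
      set c : ℝ → EuclideanSpace ℝ (Fin 2) :=
        fun θ => (WithLp.equiv 2 (Fin 2 → ℝ)).symm ![Real.cos θ, Real.sin θ] with hc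
      have hcapply0 : ∀ θ, c θ 0 = Real.cos θ := fun θ => rfl
      have hcapply1 : ∀ θ, c θ 1 = Real.sin θ := fun θ => rfl
      have hcnorm : ∀ θ, ‖c θ‖ = 1 := by
        intro θ
        rw [EuclideanSpace.norm_eq]
        simp [Fin.sum_univ_two, hcapply0, hcapply1, sq_abs, ← sq,
          Real.cos_sq_add_sin_sq]
      have hccont : Continuous c := by
        apply (PiLp.continuousLinearEquiv 2 ℝ (fun _ : Fin 2 => ℝ)).symm.continuous.comp
        apply continuous_pi
        intro i
        fin_cases i
        · exact Real.continuous_cos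
        · exact Real.continuous_sin
      have hcpi : ∀ θ, c (θ + π) = -c θ := by
        intro θ
        apply (PiLp.continuousLinearEquiv 2 ℝ (fun _ : Fin 2 => ℝ)).injective
        funext i
        fin_cases i <;>
          simp [hc, Real.cos_add_pi, Real.sin_add_pi]
      set w : ℝ → ℝ := fun θ => η 0 * (G (c θ)) 1 - η 1 * (G (c θ)) 0 with hw
      have hwcont : Continuous w := by
        apply Continuous.sub
        · exact continuous_const.mul ((EuclideanSpace.proj (1 : Fin 2)).continuous.comp
            (hcont.comp hccont))
        · exact continuous_const.mul ((EuclideanSpace.proj (0 : Fin 2)).continuous.comp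
            (hcont.comp hccont))
      have hwpi : ∀ θ, w (θ + π) = -w θ := by
        intro θ
        simp only [hw, hcpi, hodd]
        simp [PiLp.neg_apply]
        ring
      obtain ⟨θ₀, hθ₀⟩ : ∃ θ, w θ = 0 := by
        rcases le_total (w 0) 0 with h | h
        · have h2 : 0 ≤ w π := by
            have := hwpi 0
            rw [zero_add] at this
            rw [this]
            linarith
          obtain ⟨θ, _, hθ⟩ := intermediate_value_Icc Real.pi_pos.le
            hwcont.continuousOn ⟨h, h2⟩
          exact ⟨θ, hθ⟩
        · have h2 : w π ≤ 0 := by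
            have := hwpi 0
            rw [zero_add] at this
            rw [this]
            linarith
          obtain ⟨θ, _, hθ⟩ := intermediate_value_Icc' Real.pi_pos.le
            hwcont.continuousOn ⟨h2, h⟩
          exact ⟨θ, hθ⟩
      set v := G (c θ₀) with hv
      have hvne : v ≠ 0 := by
        intro h0
        have := hlow (c θ₀)
        rw [hcnorm, ← hv, h0] at this
        simp at this
        linarith
      have hpar : η 0 * v 1 = η 1 * v 0 := by
        have : η 0 * v 1 - η 1 * v 0 = 0 := hθ₀
        linarith
      -- v = lam • η
      have hηcoord : η 0 ≠ 0 ∨ η 1 ≠ 0 := by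
        by_contra h
        push_neg at h
        apply hη
        ext i
        fin_cases i
        · exact h.1
        · exact h.2
      obtain ⟨lam, hlam⟩ : ∃ lam : ℝ, v = lam • η := by
        rcases hηcoord with h | h
        · refine ⟨v 0 / η 0, ?_⟩
          ext i
          fin_cases i <;> simp [PiLp.smul_apply, smul_eq_mul]
          · field_simp
          · field_simp
            linarith [hpar]
        · refine ⟨v 1 / η 1, ?_⟩
          ext i
          fin_cases i <;> simp [PiLp.smul_apply, smul_eq_mul]
          · field_simp
            linarith [hpar]
          · field_simp
      have hlamne : lam ≠ 0 := by
        rintro rfl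
        rw [zero_smul] at hlam
        exact hvne hlam
      obtain ⟨ξ₀, lam', hlam', hpos⟩ :
          ∃ (ξ₀ : EuclideanSpace ℝ (Fin 2)) (lam' : ℝ), G ξ₀ = lam' • η ∧ 0 < lam' := by
        rcases hlamne.lt_or_gt with h | h
        · exact ⟨-(c θ₀), -lam, by rw [hodd, ← hv, hlam, neg_smul], by linarith⟩
        · exact ⟨c θ₀, lam, by rw [← hv, hlam], h⟩
      refine ⟨(lam'⁻¹) ^ ((1 : ℝ) / (r - 1)) • ξ₀, ?_⟩
      have ht : 0 < (lam'⁻¹) ^ ((1 : ℝ) / (r - 1)) :=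
        Real.rpow_pos_of_pos (inv_pos.mpr hpos) _
      rw [hscale _ ht, hlam', smul_smul]
      have hexp : ((lam'⁻¹ ^ ((1 : ℝ) / (r - 1))) ^ (r - 1)) * lam' = 1 := by
        rw [← Real.rpow_mul (inv_pos.mpr hpos).le, one_div_mul_cancel hrne,
          Real.rpow_one, inv_mul_cancel₀ hpos.ne']
      rw [hexp, one_smul]
  have hbij : Function.Bijective G := ⟨hinj, hsurj⟩
  have hright : ∀ x, G (Function.invFun G x) = x :=
    fun x => Function.invFun_eq (hsurj x)
  have hleft : ∀ x, Function.invFun G (G x) = x :=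
    fun x => Function.leftInverse_invFun hinj x
  refine ⟨hsurj, hbij, ?_⟩
  intro l η
  rcases eq_or_ne l 0 with rfl | hl
  · have h0 : Function.invFun G 0 = 0 := by
      have := hleft 0
      rwa [hG0] at this
    simp [h0]
  · apply hinj
    rw [hright, hhom, hright]
    congr 1
    have habs : |(|l| ^ (r' - 2) * l)| = |l| ^ (r' - 1) := by
      rw [abs_mul, abs_of_nonneg (Real.rpow_nonneg (abs_nonneg l) _),
        ← Real.rpow_add_one (abs_ne_zero.mpr hl)]
      ring_nf
    rw [habs, ← Real.rpow_mul (abs_nonneg l), ← mul_assoc,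
      ← Real.rpow_add (abs_pos.mpr hl)]
    have hz : (r' - 1) * (r - 2) + (r' - 2) = 0 := by
      rw [hr']; field_simp; ring
    rw [hz, Real.rpow_zero, one_mul]
end

section
/- Let 1 < r < 2, f' ∈ ℝ² a constant vector, and μ > 0. The explicit profile u'(y₃) solving the reduced 1D problem −μ 2^{-r/2} ∂_{y₃}(|∂_{y₃}u'|^{r-2}∂_{y₃}u') = g on (0,1) with u'(0) = u'(1) = 0 and constant right-hand side g ∈ ℝ², satisfies ∫₀¹ u'(y₃) dy₃ = (1/(2^{r'/2}(r'+1)μ^{r'-1})) |g|^{r'-2} g, where r' = r/(r-1). (This is the derivation of the nonlinear Reynolds average velocity formula (U_Reynolds_super).) -/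
open Real MeasureTheory

variable {F : Type*} [NormedAddCommGroup F] [InnerProductSpace ℝ F]

lemma psi_cont {q : ℝ} (hq : 0 ≤ q) : Continuous fun w : F => ‖w‖ ^ q • w :=
  ((Real.continuous_rpow_const hq).comp continuous_norm).smul continuous_id

lemma psi_phi {r r' : ℝ} (hr1 : 1 < r) (hr' : r' = r / (r - 1)) (v : F) :
    ‖‖v‖ ^ (r - 2) • v‖ ^ (r' - 2) • (‖v‖ ^ (r - 2) • v) = v := by
  rcases eq_or_ne v 0 with rfl | hv
  · simp
  · have hn : (0:ℝ) < ‖v‖ := norm_pos_iff.mpr hv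
    have hr1' : r - 1 ≠ 0 := by intro h; nlinarith
    have key : (r - 1) * (r' - 2) + (r - 2) = 0 := by
      have e : (r - 1) * r' = r := by rw [hr']; field_simp
      linear_combination e
    rw [norm_smul, Real.norm_eq_abs, abs_of_nonneg (Real.rpow_nonneg (norm_nonneg v) _),
      smul_smul]
    nth_rewrite 2 [← Real.rpow_one ‖v‖]
    rw [← Real.rpow_add hn, ← Real.rpow_mul hn.le, ← Real.rpow_add hn]
    have : r - 2 + 1 = r - 1 := by ring
    rw [this, key, Real.rpow_zero, one_smul]

open scoped RealInnerProductSpace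

lemma rpow_mul_self {x q : ℝ} (hx : 0 ≤ x) (hq : 0 < q) : x ^ q * x = x ^ (q + 1) := by
  rcases eq_or_lt_of_le hx with rfl | hx
  · rw [Real.zero_rpow hq.ne', Real.zero_rpow (by positivity), zero_mul]
  · rw [Real.rpow_add hx, Real.rpow_one]

lemma psi_mono {q : ℝ} (hq : 0 < q) {a b : F} (hab : a ≠ b) :
    0 < ⟪‖a‖ ^ q • a - ‖b‖ ^ q • b, a - b⟫ := by
  have expand : ⟪‖a‖ ^ q • a - ‖b‖ ^ q • b, a - b⟫
      = ‖a‖ ^ q * (‖a‖ * ‖a‖) + ‖b‖ ^ q * (‖b‖ * ‖b‖)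
        - (‖a‖ ^ q + ‖b‖ ^ q) * ⟪a, b⟫ := by
    rw [inner_sub_left, inner_sub_right, inner_sub_right, real_inner_smul_left,
      real_inner_smul_left, real_inner_smul_left, real_inner_smul_left,
      real_inner_self_eq_norm_mul_norm, real_inner_self_eq_norm_mul_norm,
      real_inner_comm b a]
    ring
  rw [expand]
  have hA : (0:ℝ) ≤ ‖a‖ ^ q := Real.rpow_nonneg (norm_nonneg a) q
  have hB : (0:ℝ) ≤ ‖b‖ ^ q := Real.rpow_nonneg (norm_nonneg b) q
  have hip : ⟪a, b⟫ ≤ ‖a‖ * ‖b‖ := real_inner_le_norm a b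
  rcases lt_trichotomy ‖a‖ ‖b‖ with h | h | h
  · have hst : ‖a‖ ^ q * ‖a‖ < ‖b‖ ^ q * ‖b‖ := by
      rw [rpow_mul_self (norm_nonneg a) hq, rpow_mul_self (norm_nonneg b) hq]
      exact Real.rpow_lt_rpow (norm_nonneg a) h (by positivity)
    nlinarith [mul_nonneg (add_nonneg hA hB) (sub_nonneg.mpr hip),
      mul_pos (sub_pos.mpr h) (sub_pos.mpr hst)]
  · have hn : 0 < ‖b‖ := by
      rcases eq_or_lt_of_le (norm_nonneg b) with h0 | h0
      · exfalso; apply hab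
        have hb0 : b = 0 := norm_eq_zero.mp h0.symm
        have ha0 : a = 0 := norm_eq_zero.mp (by rw [h, ← h0])
        rw [ha0, hb0]
      · exact h0
    have hips : ⟪a, b⟫ < ‖a‖ * ‖b‖ := by
      rcases eq_or_lt_of_le hip with he | hl
      · exfalso
        have := inner_eq_norm_mul_iff_real.mp he
        rw [h] at this
        exact hab (smul_right_injective F hn.ne' this)
      · exact hl
    have hBpos : 0 < ‖b‖ ^ q := Real.rpow_pos_of_pos hn q
    rw [h] at hips ⊢
    nlinarith [mul_pos (by linarith : (0:ℝ) < ‖b‖ ^ q + ‖b‖ ^ q) (sub_pos.mpr hips)]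
  · have hst : ‖b‖ ^ q * ‖b‖ < ‖a‖ ^ q * ‖a‖ := by
      rw [rpow_mul_self (norm_nonneg a) hq, rpow_mul_self (norm_nonneg b) hq]
      exact Real.rpow_lt_rpow (norm_nonneg b) h (by positivity)
    nlinarith [mul_nonneg (add_nonneg hA hB) (sub_nonneg.mpr hip),
      mul_pos (sub_pos.mpr h) (sub_pos.mpr hst)]

set_option maxHeartbeats 1000000 in
/-- Derivation of the nonlinear Reynolds average velocity formula: if
`u' : [0,1] → ℝ²` is `C¹`, vanishes at `0` and `1`, and the flux
`|∂_{y₃}u'|^{r-2}∂_{y₃}u'` has constant derivative `−g/(μ2^{-r/2})` on `(0,1)`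
(i.e. `−μ2^{-r/2}∂_{y₃}(|∂_{y₃}u'|^{r-2}∂_{y₃}u') = g`), then
`∫₀¹ u' = (1/(2^{r'/2}(r'+1)μ^{r'-1}))|g|^{r'-2}g` where `r' = r/(r-1)`. -/
theorem reynolds_average_velocity (r r' μ : ℝ) (hr1 : 1 < r) (hr2 : r < 2)
    (hr' : r' = r / (r - 1)) (hμ : 0 < μ)
    (g : EuclideanSpace ℝ (Fin 2))
    (u : ℝ → EuclideanSpace ℝ (Fin 2)) (hu : ContDiff ℝ 1 u)
    (hflux : ∀ y ∈ Set.Ioo (0:ℝ) 1,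
      HasDerivAt (fun t => ‖deriv u t‖ ^ (r - 2) • deriv u t)
        ((-(μ * (2:ℝ) ^ (-(r / 2))))⁻¹ • g) y)
    (hu0 : u 0 = 0) (hu1 : u 1 = 0) :
    ∫ y in (0:ℝ)..1, u y
      = (1 / ((2:ℝ) ^ (r' / 2) * (r' + 1) * μ ^ (r' - 1))) •
          (‖g‖ ^ (r' - 2) • g) := by
  have hrm1 : (0:ℝ) < r - 1 := by linarith
  have hr'2 : 2 < r' := by
    rw [hr', lt_div_iff₀ hrm1]; linarith
  set q : ℝ := r' - 2 with hqdef
  have hq : 0 < q := by simp only [hqdef]; linarith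
  set c : ℝ := (-(μ * (2:ℝ) ^ (-(r / 2))))⁻¹ with hcdef
  have hc_neg : c < 0 := by
    rw [hcdef, inv_neg]
    have : (0:ℝ) < μ * (2:ℝ) ^ (-(r/2)) := by positivity
    simp only [neg_neg, Left.neg_neg_iff]
    positivity
  set k : EuclideanSpace ℝ (Fin 2) := c • g with hkdef
  set v : ℝ → EuclideanSpace ℝ (Fin 2) := deriv u with hvdef
  have hv_cont : Continuous v := hu.continuous_deriv le_rfl
  have hv_diff : Differentiable ℝ u := hu.differentiable one_ne_zero
  set F : ℝ → EuclideanSpace ℝ (Fin 2) := fun t => ‖v t‖ ^ (r - 2) • v t with hFdef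
  set A : EuclideanSpace ℝ (Fin 2) := F (1/2) - (1/2 : ℝ) • k with hAdef
  -- Step B : F is affine on Ioo
  have hFlin : ∀ y ∈ Set.Ioo (0:ℝ) 1, F y = A + y • k := by
    have hH : ∀ y ∈ Set.Ioo (0:ℝ) 1,
        HasDerivWithinAt (fun t => F t - t • k) 0 (Set.Ioo (0:ℝ) 1) y := by
      intro y hy
      have h1 : HasDerivAt (fun t : ℝ => t • k) ((1:ℝ) • k) y :=
        (hasDerivAt_id y).smul_const k
      have h2 := (hflux y hy).sub h1
      rw [one_smul] at h2
      rw [sub_self] at h2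
      exact h2.hasDerivWithinAt
    intro y hy
    have half : (1/2 : ℝ) ∈ Set.Ioo (0:ℝ) 1 := by norm_num
    have := Convex.norm_image_sub_le_of_norm_hasDerivWithin_le (C := 0)
      (f' := fun _ => (0 : EuclideanSpace ℝ (Fin 2))) hH
      (fun x _ => by simp) (convex_Ioo 0 1) half hy
    rw [mul_comm, mul_zero] at this
    have heq : F y - y • k = F (1/2) - (1/2 : ℝ) • k := by
      have := norm_le_zero_iff.mp this
      have := sub_eq_zero.mp this
      exact this
    rw [hAdef, ← heq]; abel
  -- Step C : v on Ioo
  have hvy : ∀ y ∈ Set.Ioo (0:ℝ) 1, v y = ‖A + y • k‖ ^ q • (A + y • k) := by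
    intro y hy
    have := psi_phi hr1 hr' (v y)
    calc v y = ‖F y‖ ^ (r' - 2) • F y := this.symm
    _ = ‖A + y • k‖ ^ q • (A + y • k) := by rw [hFlin y hy, hqdef]
  -- continuity helper
  have hcontψ : ∀ (W : EuclideanSpace ℝ (Fin 2)),
      Continuous fun y : ℝ => ‖W + y • k‖ ^ q • (W + y • k) := fun W =>
    (psi_cont hq.le).comp (continuous_const.add (continuous_id.smul continuous_const))
  -- congruence helper : integrals only depend on values on Ioo 0 1
  have hae : ∀ {f f2 : ℝ → EuclideanSpace ℝ (Fin 2)}, (∀ y ∈ Set.Ioo (0:ℝ) 1, f y = f2 y) →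
      ∫ y in (0:ℝ)..1, f y = ∫ y in (0:ℝ)..1, f2 y := by
    intro f f2 h
    apply intervalIntegral.integral_congr_ae
    have h1 : ∀ᵐ x : ℝ, x ≠ (1:ℝ) := by
      refine ae_iff.mpr ?_
      simpa [not_not, Set.setOf_eq_eq_singleton] using measure_singleton (1:ℝ)
    filter_upwards [h1] with x hx hxI
    rw [Set.uIoc_of_le (by norm_num : (0:ℝ) ≤ 1)] at hxI
    exact h x ⟨hxI.1, lt_of_le_of_ne hxI.2 hx⟩
  -- Step D : the integral of ψ(A + y k) vanishes
  have hint0 : ∫ y in (0:ℝ)..1, v y = 0 := by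
    rw [hvdef, intervalIntegral.integral_deriv_eq_sub (fun x _ => hv_diff x)
      (hv_cont.intervalIntegrable 0 1), hu0, hu1, sub_zero]
  have hGA : ∫ y in (0:ℝ)..1, ‖A + y • k‖ ^ q • (A + y • k) = 0 := by
    rw [← hae hvy]; exact hint0
  -- Step E : mirrored point
  have hGB : ∫ y in (0:ℝ)..1, ‖(-A - k) + y • k‖ ^ q • ((-A - k) + y • k) = 0 := by
    have h1 : ∀ y : ℝ, (-A - k) + y • k = -(A + (1 - y) • k) := by
      intro y; rw [sub_smul, one_smul]; abel
    have h2 : (∫ y in (0:ℝ)..1, ‖(-A - k) + y • k‖ ^ q • ((-A - k) + y • k))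
        = ∫ y in (0:ℝ)..1, -(‖A + (1 - y) • k‖ ^ q • (A + (1 - y) • k)) := by
      apply intervalIntegral.integral_congr
      intro y _
      show ‖(-A - k) + y • k‖ ^ q • ((-A - k) + y • k)
        = -(‖A + (1 - y) • k‖ ^ q • (A + (1 - y) • k))
      rw [h1 y, norm_neg, smul_neg]
    have h3 : (∫ y in (0:ℝ)..1, ‖A + (1 - y) • k‖ ^ q • (A + (1 - y) • k))
        = ∫ y in (0:ℝ)..1, ‖A + y • k‖ ^ q • (A + y • k) := by
      simpa only [sub_zero, sub_self] using intervalIntegral.integral_comp_sub_left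
        (a := 0) (b := 1) (fun x => ‖A + x • k‖ ^ q • (A + x • k)) 1
    rw [h2, intervalIntegral.integral_neg, h3, hGA, neg_zero]
  -- Step F : strict monotonicity pins down A
  have hBA : -A - k = A := by
    by_contra hne
    have hdne : ∀ y : ℝ, (-A - k) + y • k ≠ A + y • k := fun y h =>
      hne (by have := add_right_cancel h; exact this)
    set L : EuclideanSpace ℝ (Fin 2) →L[ℝ] ℝ := innerSL ℝ ((-A - k) - A) with hLdef
    have hIc : Continuous fun y : ℝ =>
        (‖(-A - k) + y • k‖ ^ q • ((-A - k) + y • k)) - (‖A + y • k‖ ^ q • (A + y • k)) :=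
      (hcontψ (-A - k)).sub (hcontψ A)
    have hIi : IntervalIntegrable (fun y : ℝ =>
        (‖(-A - k) + y • k‖ ^ q • ((-A - k) + y • k)) - (‖A + y • k‖ ^ q • (A + y • k)))
        volume 0 1 := hIc.intervalIntegrable 0 1
    have hzero : (∫ y in (0:ℝ)..1, L ((‖(-A - k) + y • k‖ ^ q • ((-A - k) + y • k))
        - (‖A + y • k‖ ^ q • (A + y • k)))) = 0 := by
      rw [L.intervalIntegral_comp_comm hIi,
        intervalIntegral.integral_sub ((hcontψ (-A - k)).intervalIntegrable 0 1)
          ((hcontψ A).intervalIntegrable 0 1), hGA, hGB, sub_zero, map_zero]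
    have hpos : 0 < ∫ y in (0:ℝ)..1, L ((‖(-A - k) + y • k‖ ^ q • ((-A - k) + y • k))
        - (‖A + y • k‖ ^ q • (A + y • k))) := by
      apply intervalIntegral.intervalIntegral_pos_of_pos_on
        ((L.continuous.comp hIc).intervalIntegrable 0 1)
      · intro x _
        have hmono := psi_mono hq (hdne x)
        have hdd : ((-A - k) + x • k) - (A + x • k) = (-A - k) - A := by abel
        rw [hdd, real_inner_comm] at hmono
        exact hmono
      · norm_num
    rw [hzero] at hpos
    exact lt_irrefl 0 hpos
  have hAhalf : A = -((2⁻¹:ℝ) • k) := by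
    have h2 : A + A = -k := by nth_rewrite 1 [← hBA]; abel
    have h3 : A = (2⁻¹:ℝ) • (A + A) := by
      rw [smul_add, ← add_smul]; norm_num
    rw [h3, h2, smul_neg]
  have hAk : ∀ y : ℝ, A + y • k = (y - 2⁻¹) • k := by
    intro y
    rw [sub_smul, hAhalf]; abel
  -- Step G1 : integration by parts
  have hIBP : ∫ y in (0:ℝ)..1, u y = ∫ y in (0:ℝ)..1, (1 - y) • v y := by
    have hsmc : Continuous fun y : ℝ => (y - 1) • v y :=
      (continuous_id.sub continuous_const).smul hv_cont
    have hi1 : IntervalIntegrable u volume 0 1 := hu.continuous.intervalIntegrable 0 1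
    have hi2 : IntervalIntegrable (fun y : ℝ => (y - 1) • v y) volume 0 1 :=
      hsmc.intervalIntegrable 0 1
    have hD : ∀ x ∈ Set.uIcc (0:ℝ) 1,
        HasDerivAt (fun t => (t - 1) • u t) ((x - 1) • v x + u x) x := by
      intro x _
      have h1 : HasDerivAt (fun t : ℝ => t - 1) 1 x := (hasDerivAt_id x).sub_const 1
      have h2 : HasDerivAt (fun t => (t - 1) • u t) ((x - 1) • deriv u x + (1:ℝ) • u x) x :=
        h1.smul (hv_diff x).hasDerivAt
      simpa [one_smul] using h2
    have hci : IntervalIntegrable (fun x => (x - 1) • v x + u x) volume 0 1 :=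
      hi2.add hi1
    have hFTC := intervalIntegral.integral_eq_sub_of_hasDerivAt hD hci
    have hval : ((1:ℝ) - 1) • u 1 - ((0:ℝ) - 1) • u 0 = 0 := by
      rw [hu0, hu1, smul_zero, smul_zero, sub_zero]
    rw [hval] at hFTC
    rw [intervalIntegral.integral_add hi2 hi1] at hFTC
    have h2 : ∫ y in (0:ℝ)..1, (1 - y) • v y = -∫ y in (0:ℝ)..1, (y - 1) • v y := by
      rw [← intervalIntegral.integral_neg]
      apply intervalIntegral.integral_congr
      intro y _
      show (1 - y) • v y = -((y - 1) • v y)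
      rw [← neg_smul]
      congr 1
      ring
    rw [h2]
    exact eq_neg_of_add_eq_zero_right hFTC
  -- Step G2 : pull out the constant vector
  have hψk : ∀ t : ℝ, ‖t • k‖ ^ q • (t • k) = ((|t| ^ q * t) * ‖k‖ ^ q) • k := by
    intro t
    rw [norm_smul, Real.norm_eq_abs, Real.mul_rpow (abs_nonneg t) (norm_nonneg k), smul_smul]
    congr 1
    ring
  set J : ℝ := ∫ y in (0:ℝ)..1, (1 - y) * (|y - 2⁻¹| ^ q * (y - 2⁻¹)) with hJdef
  have hsc : ∫ y in (0:ℝ)..1, (1 - y) • v y = J • ((‖k‖ ^ q) • k) := by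
    rw [hJdef, ← intervalIntegral.integral_smul_const]
    apply hae
    intro y hy
    rw [hvy y hy, hAk y, hψk (y - 2⁻¹)]
    simp only [smul_smul]
    congr 1
    ring
  -- Step G3 : compute the scalar integral J
  have habs_cont : Continuous fun t : ℝ => |t| ^ q :=
    (Real.continuous_rpow_const hq.le).comp continuous_abs
  have hcont1 : Continuous fun t : ℝ => |t| ^ q * t := habs_cont.mul continuous_id
  have hcont2 : Continuous fun t : ℝ => |t| ^ q * t * t := hcont1.mul continuous_id
  have h1 : J = ∫ t in (-2⁻¹ : ℝ)..2⁻¹, (2⁻¹ - t) * (|t| ^ q * t) := by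
    have hcs := intervalIntegral.integral_comp_sub_right (a := 0) (b := 1)
      (fun t => (2⁻¹ - t) * (|t| ^ q * t)) 2⁻¹
    have he0 : (0:ℝ) - 2⁻¹ = -2⁻¹ := by norm_num
    have he1 : (1:ℝ) - 2⁻¹ = 2⁻¹ := by norm_num
    rw [he0, he1] at hcs
    rw [hJdef, ← hcs]
    apply intervalIntegral.integral_congr
    intro y _
    show (1 - y) * (|y - 2⁻¹| ^ q * (y - 2⁻¹)) = (2⁻¹ - (y - 2⁻¹)) * (|y - 2⁻¹| ^ q * (y - 2⁻¹))
    ring_nf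
  have hodd : ∫ t in (-2⁻¹:ℝ)..2⁻¹, |t| ^ q * t = 0 := by
    have h3 := intervalIntegral.integral_comp_neg (a := (-2⁻¹:ℝ)) (b := 2⁻¹)
      (fun t => |t| ^ q * t)
    simp only [neg_neg] at h3
    have h2 : (∫ x in (-2⁻¹:ℝ)..2⁻¹, (fun t => |t| ^ q * t) (-x))
        = ∫ x in (-2⁻¹:ℝ)..2⁻¹, -(|x| ^ q * x) := by
      apply intervalIntegral.integral_congr
      intro x _
      show |(-x)| ^ q * (-x) = -(|x| ^ q * x)
      rw [abs_neg]
      ring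
    rw [h2, intervalIntegral.integral_neg] at h3
    linarith
  have hevenhalf : ∫ t in (-2⁻¹:ℝ)..(0:ℝ), |t| ^ q * t * t
      = ∫ t in (0:ℝ)..2⁻¹, |t| ^ q * t * t := by
    have h3 := intervalIntegral.integral_comp_neg (a := (0:ℝ)) (b := 2⁻¹)
      (fun t => |t| ^ q * t * t)
    simp only [neg_zero] at h3
    have h2 : (∫ x in (0:ℝ)..2⁻¹, (fun t => |t| ^ q * t * t) (-x))
        = ∫ x in (0:ℝ)..2⁻¹, |x| ^ q * x * x := by
      apply intervalIntegral.integral_congr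
      intro x _
      show |(-x)| ^ q * (-x) * (-x) = |x| ^ q * x * x
      rw [abs_neg]
      ring
    rw [h2] at h3
    exact h3.symm
  have hpospart : ∫ t in (0:ℝ)..2⁻¹, |t| ^ q * t * t = 2⁻¹ ^ (q + 3) / (q + 3) := by
    have hcg : ∫ t in (0:ℝ)..2⁻¹, |t| ^ q * t * t = ∫ t in (0:ℝ)..2⁻¹, t ^ (q + 1 + 1) := by
      apply intervalIntegral.integral_congr
      intro t ht
      rw [Set.uIcc_of_le (by norm_num : (0:ℝ) ≤ 2⁻¹)] at ht
      show |t| ^ q * t * t = t ^ (q + 1 + 1)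
      rw [abs_of_nonneg ht.1, rpow_mul_self ht.1 hq, rpow_mul_self ht.1 (by linarith)]
    rw [hcg, integral_rpow (Or.inl (by linarith : (-1:ℝ) < q + 1 + 1)),
      Real.zero_rpow (by linarith : q + 1 + 1 + 1 ≠ 0), sub_zero]
    have : q + 1 + 1 + 1 = q + 3 := by ring
    rw [this]
  have hJ : J = -(2 * (2⁻¹ ^ (q + 3)) / (q + 3)) := by
    have hsplit : (∫ t in (-2⁻¹:ℝ)..2⁻¹, (2⁻¹ - t) * (|t| ^ q * t))
        = 2⁻¹ * (∫ t in (-2⁻¹:ℝ)..2⁻¹, |t| ^ q * t)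
          - ∫ t in (-2⁻¹:ℝ)..2⁻¹, |t| ^ q * t * t := by
      rw [← intervalIntegral.integral_const_mul, ← intervalIntegral.integral_sub (f := fun t : ℝ => 2⁻¹ * (|t| ^ q * t))
        ((continuous_const.mul hcont1).intervalIntegrable _ _) (hcont2.intervalIntegrable _ _)]
      apply intervalIntegral.integral_congr
      intro t _
      show (2⁻¹ - t) * (|t| ^ q * t) = 2⁻¹ * (|t| ^ q * t) - |t| ^ q * t * t
      ring
    have hadj : (∫ t in (-2⁻¹:ℝ)..(0:ℝ), |t| ^ q * t * t)
        + ∫ t in (0:ℝ)..2⁻¹, |t| ^ q * t * t = ∫ t in (-2⁻¹:ℝ)..2⁻¹, |t| ^ q * t * t :=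
      intervalIntegral.integral_add_adjacent_intervals
        (hcont2.intervalIntegrable _ _) (hcont2.intervalIntegrable _ _)
    rw [h1, hsplit, hodd, mul_zero, zero_sub, ← hadj, hevenhalf, hpospart]
    ring
  -- Step G4 : final constants
  have hr'q : r' = q + 2 := by rw [hqdef]; ring
  have hcabs : |c| = -c := abs_of_neg hc_neg
  have habs : |c| = μ⁻¹ * 2 ^ (r / 2) := by
    rw [hcabs, hcdef, inv_neg, neg_neg, mul_inv]
    congr 1
    rw [Real.rpow_neg (by norm_num : (0:ℝ) ≤ 2), inv_inv]
  have hexp : r / 2 * (q + 1) = (q + 2) / 2 := by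
    have h5 : q = r / (r - 1) - 2 := by rw [hqdef, hr']
    rw [h5]
    field_simp
    ring
  have h2q : |c| ^ (q + 1) = 2 ^ ((q + 2) / 2) / μ ^ (q + 1) := by
    rw [habs, Real.mul_rpow (inv_nonneg.mpr hμ.le) (Real.rpow_nonneg (by norm_num) _),
      Real.inv_rpow hμ.le, ← Real.rpow_mul (by norm_num : (0:ℝ) ≤ 2), hexp, inv_mul_eq_div]
  have hKEY : J * (|c| ^ q * c) = 1 / ((2:ℝ) ^ ((q + 2) / 2) * (q + 3) * μ ^ (q + 1)) := by
    have hick : |c| ^ q * c = -(|c| ^ (q + 1)) := by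
      have hcc : c = -|c| := by rw [hcabs, neg_neg]
      nth_rewrite 2 [hcc]
      rw [mul_neg, rpow_mul_self (abs_nonneg c) hq]
    rw [hJ, hick, h2q]
    have hab : 2 * ((2:ℝ) ^ ((q+2)/2) * (2:ℝ) ^ ((q+2)/2)) = 2 ^ (q+3) := by
      rw [← Real.rpow_add (by norm_num : (0:ℝ) < 2),
        show ((q+2)/2) + ((q+2)/2) = q + 2 by ring,
        show (2:ℝ) * 2 ^ (q+2) = 2 ^ (1:ℝ) * 2 ^ (q+2) by rw [Real.rpow_one],
        ← Real.rpow_add (by norm_num : (0:ℝ) < 2),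
        show (1:ℝ) + (q+2) = q + 3 by ring]
    have h2i : ((2:ℝ)⁻¹) ^ (q + 3) = ((2:ℝ) ^ (q + 3))⁻¹ :=
      Real.inv_rpow (by norm_num) _
    rw [h2i]
    have ha : 0 < (2:ℝ) ^ ((q+2)/2) := Real.rpow_pos_of_pos (by norm_num) _
    have hb : 0 < (2:ℝ) ^ (q+3) := Real.rpow_pos_of_pos (by norm_num) _
    have hm : 0 < μ ^ (q+1) := Real.rpow_pos_of_pos hμ _
    have hP : 0 < q + 3 := by linarith
    field_simp
    linear_combination hab
  -- conclusion
  have hknorm : ‖k‖ = |c| * ‖g‖ := by rw [hkdef, norm_smul, Real.norm_eq_abs]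
  rw [hIBP, hsc, hknorm, hkdef, Real.mul_rpow (abs_nonneg c) (norm_nonneg g)]
  simp only [smul_smul]
  rw [hr'q, show q + 2 + 1 = q + 3 by ring, show q + 2 - 1 = q + 1 by ring,
    show (q+2)/2 = (q+2)/2 by rfl]
  congr 1
  linear_combination ‖g‖ ^ q * hKEY
end
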